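/- Let G be a connected r-regular graph (r ≥ 1) with edges e_1,…,e_m, and for each i = 1,…,m let H_i be an r_i-regular graph on t_i ≥ 1 vertices. Fix i and let δ be an eigenvalue of the normalized Laplacian 𝓛(H_i) that admits a (real) eigenvector orthogonal to the all-ones vector. Then (1 + r_i δ)/(r_i + 1) is an eigenvalue of the normalized Laplacian of the generalized subdivision-edge corona S(G)⊖∧_{i=1}^m H_i. -/
import Mathlib


open Matrix Polynomial

/-- Adjacency matrix over `ℝ` (with classical decidability). -/
noncomputable def adjM {V : Type*} [Fintype V] [DecidableEq V] (G : SimpleGraph V) :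
    Matrix V V ℝ :=
  letI : DecidableRel G.Adj := Classical.decRel _
  G.adjMatrix ℝ

/-- Degree of a vertex (with classical decidability). -/
noncomputable def cdeg {V : Type*} [Fintype V] (G : SimpleGraph V) (v : V) : ℕ :=
  letI : DecidableRel G.Adj := Classical.decRel _
  G.degree v

/-- The normalized Laplacian `𝓛(G) = I - D^{-1/2} A D^{-1/2}` of a finite graph. -/
noncomputable def normLap {V : Type*} [Fintype V] [DecidableEq V] (G : SimpleGraph V) :
    Matrix V V ℝ :=
  1 - Matrix.diagonal (fun v => (Real.sqrt (cdeg G v))⁻¹) * adjM G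
      * Matrix.diagonal (fun v => (Real.sqrt (cdeg G v))⁻¹)

/-- `x` is an eigenvalue of the real matrix `M`. -/
def IsEigenvalue {V : Type*} [Fintype V] (M : Matrix V V ℝ) (x : ℝ) : Prop :=
  ∃ v : V → ℝ, v ≠ 0 ∧ M.mulVec v = x • v

/-- The generalized subdivision-edge corona `S(G) ⊖ ∧ᵢ Hᵢ`: take the subdivision `S(G)`
(vertices of `G` together with one inserted vertex per edge, each edge `uv` replaced by the
path `u–e–v`), add a disjoint copy of each `Hₑ`, and join the inserted vertex corresponding
to the edge `e` to every vertex of `Hₑ`. -/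
def sec {n : ℕ} (G : SimpleGraph (Fin n)) (t : G.edgeSet → ℕ)
    (H : ∀ e : G.edgeSet, SimpleGraph (Fin (t e))) :
    SimpleGraph (Fin n ⊕ (G.edgeSet ⊕ Σ e : G.edgeSet, Fin (t e))) :=
  SimpleGraph.fromRel (fun a b =>
    match a, b with
    | Sum.inl v, Sum.inr (Sum.inl e) => v ∈ (e : Sym2 (Fin n))
    | Sum.inr (Sum.inl e), Sum.inr (Sum.inr ⟨f, _⟩) => e = f
    | Sum.inr (Sum.inr ⟨e, w⟩), Sum.inr (Sum.inr ⟨f, w'⟩) =>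
        ∃ h : e = f, (H f).Adj (h ▸ w) w'
    | _, _ => False)

section Aux

lemma adjM_apply {V : Type*} [Fintype V] [DecidableEq V] (G : SimpleGraph V)
    [DecidableRel G.Adj] (a b : V) :
    adjM G a b = if G.Adj a b then 1 else 0 := by
  unfold adjM
  by_cases h : G.Adj a b <;> simp [h]

lemma cdeg_eq_sum {V : Type*} [Fintype V] (G : SimpleGraph V) [DecidableRel G.Adj] (a : V) :
    cdeg G a = ∑ b, if G.Adj a b then 1 else 0 := by
  unfold cdeg
  rw [SimpleGraph.degree, SimpleGraph.neighborFinset_eq_filter, Finset.card_filter]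
  refine Finset.sum_congr rfl fun b _ => ?_
  by_cases h : G.Adj a b <;> simp [h]

lemma normLap_mulVec_apply {V : Type*} [Fintype V] [DecidableEq V] (G : SimpleGraph V)
    [DecidableRel G.Adj] (x : V → ℝ) (a : V) :
    (normLap G).mulVec x a =
      x a - (Real.sqrt (cdeg G a))⁻¹ *
        ∑ b, (if G.Adj a b then 1 else 0) * ((Real.sqrt (cdeg G b))⁻¹ * x b) := by
  rw [normLap, Matrix.sub_mulVec, Pi.sub_apply, Matrix.one_mulVec]
  congr 1
  rw [Matrix.mulVec, dotProduct, Finset.mul_sum]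
  refine Finset.sum_congr rfl fun b _ => ?_
  rw [Matrix.mul_diagonal, Matrix.diagonal_mul, adjM_apply]
  ring

variable {n : ℕ} {G : SimpleGraph (Fin n)} {t : G.edgeSet → ℕ}
    {H : ∀ e : G.edgeSet, SimpleGraph (Fin (t e))}

lemma sec_not_adj_inl (e₀ : G.edgeSet) (w : Fin (t e₀)) (u : Fin n) :
    ¬ (sec G t H).Adj (Sum.inl u) (Sum.inr (Sum.inr ⟨e₀, w⟩)) := by
  simp [sec, SimpleGraph.fromRel_adj]

lemma sec_adj_mid (e₀ : G.edgeSet) (w : Fin (t e₀)) (e : G.edgeSet) :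
    (sec G t H).Adj (Sum.inr (Sum.inl e)) (Sum.inr (Sum.inr ⟨e₀, w⟩)) ↔ e = e₀ := by
  rw [SimpleGraph.adj_comm]
  simp [sec, SimpleGraph.fromRel_adj]

lemma sec_adj_same (e₀ : G.edgeSet) (w w' : Fin (t e₀)) :
    (sec G t H).Adj (Sum.inr (Sum.inr ⟨e₀, w⟩)) (Sum.inr (Sum.inr ⟨e₀, w'⟩)) ↔
      (H e₀).Adj w w' := by
  simp only [sec, SimpleGraph.fromRel_adj]
  constructor
  · rintro ⟨-, (⟨-, h⟩ | ⟨-, h⟩)⟩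
    · exact h
    · exact h.symm
  · intro h
    exact ⟨by simp [h.ne], Or.inl ⟨trivial, h⟩⟩

lemma sec_not_adj_diff (e₀ f : G.edgeSet) (hne : f ≠ e₀) (w : Fin (t e₀)) (w' : Fin (t f)) :
    ¬ (sec G t H).Adj (Sum.inr (Sum.inr ⟨e₀, w⟩)) (Sum.inr (Sum.inr ⟨f, w'⟩)) := by
  simp only [sec, SimpleGraph.fromRel_adj]
  rintro ⟨-, (⟨h, -⟩ | ⟨h, -⟩)⟩
  · exact hne h.symm
  · exact hne h

/-- Degree of a vertex in the copy of `H e₀` inside the corona. -/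
lemma sec_cdeg_copy [DecidableRel G.Adj] (e₀ : G.edgeSet) (w : Fin (t e₀)) (rr₀ : ℕ)
    (hH : ∀ w, cdeg (H e₀) w = rr₀) :
    cdeg (sec G t H) (Sum.inr (Sum.inr ⟨e₀, w⟩)) = rr₀ + 1 := by
  classical
  rw [cdeg_eq_sum]
  rw [Fintype.sum_sum_type, Fintype.sum_sum_type]
  have h1 : ∑ u : Fin n,
      (if (sec G t H).Adj (Sum.inr (Sum.inr ⟨e₀, w⟩)) (Sum.inl u) then 1 else 0) = 0 := by
    refine Finset.sum_eq_zero fun u _ => ?_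
    rw [if_neg (fun h => sec_not_adj_inl e₀ w u h.symm)]
  have h2 : ∑ e : G.edgeSet,
      (if (sec G t H).Adj (Sum.inr (Sum.inr ⟨e₀, w⟩)) (Sum.inr (Sum.inl e)) then 1 else 0)
      = 1 := by
    rw [Finset.sum_congr rfl (fun e _ => by
      rw [if_congr ((SimpleGraph.adj_comm _ _ _).trans (sec_adj_mid e₀ w e)) rfl rfl])]
    simp
  have h3 : ∑ p : Σ e : G.edgeSet, Fin (t e),
      (if (sec G t H).Adj (Sum.inr (Sum.inr ⟨e₀, w⟩)) (Sum.inr (Sum.inr p)) then 1 else 0)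
      = rr₀ := by
    rw [← Finset.univ_sigma_univ, Finset.sum_sigma]
    rw [Finset.sum_eq_single e₀]
    · rw [← hH w, cdeg_eq_sum]
      refine Finset.sum_congr rfl fun w' _ => ?_
      rw [if_congr (sec_adj_same e₀ w w') rfl rfl]
    · intro f _ hf
      exact Finset.sum_eq_zero fun w' _ => by
        rw [if_neg (sec_not_adj_diff e₀ f hf w w')]
    · intro h; exact absurd (Finset.mem_univ e₀) h
  rw [h1, h2, h3]; omega

end Aux

theorem stmt6 {n r : ℕ} (hr : 1 ≤ r)
    (G : SimpleGraph (Fin n)) [DecidableRel G.Adj]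
    (hconn : G.Connected) (hG : ∀ v, cdeg G v = r)
    (t : G.edgeSet → ℕ) (ht : ∀ e, 1 ≤ t e)
    (rr : G.edgeSet → ℕ) (H : ∀ e : G.edgeSet, SimpleGraph (Fin (t e)))
    (hH : ∀ e w, cdeg (H e) w = rr e)
    (e₀ : G.edgeSet) (δ : ℝ)
    (hδ : ∃ v : Fin (t e₀) → ℝ, v ≠ 0 ∧ (normLap (H e₀)).mulVec v = δ • v ∧
      ∑ w, v w = 0) :
    IsEigenvalue (normLap (sec G t H)) ((1 + (rr e₀ : ℝ) * δ) / ((rr e₀ : ℝ) + 1)) := by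
  classical
  obtain ⟨v, hv0, hvE, hvS⟩ := hδ
  set μ : ℝ := (1 + (rr e₀ : ℝ) * δ) / ((rr e₀ : ℝ) + 1) with hμ
  set x : (Fin n ⊕ (G.edgeSet ⊕ Σ e : G.edgeSet, Fin (t e))) → ℝ :=
    Sum.elim (fun _ => 0) (Sum.elim (fun _ => 0)
      (fun p => if h : p.1 = e₀ then v (h ▸ p.2) else 0)) with hx
  have hxβ : ∀ w : Fin (t e₀), x (Sum.inr (Sum.inr ⟨e₀, w⟩)) = v w := by
    intro w; simp [hx]
  have hxne : ∀ (f : G.edgeSet) (hf : f ≠ e₀) (w' : Fin (t f)),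
      x (Sum.inr (Sum.inr ⟨f, w'⟩)) = 0 := by
    intro f hf w'; simp [hx, hf]
  -- neighbor sum identity in H e₀
  have hsum : ∀ w, ∑ w', (if (H e₀).Adj w w' then (1:ℝ) else 0) * v w'
      = (rr e₀ : ℝ) * (1 - δ) * v w := by
    intro w
    have hvrow : v w - (Real.sqrt (rr e₀))⁻¹ *
        ∑ w', (if (H e₀).Adj w w' then 1 else 0) * ((Real.sqrt (rr e₀))⁻¹ * v w')
        = δ * v w := by
      have := congrFun hvE w
      rw [normLap_mulVec_apply] at this
      simpa [hH] using this
    rcases Nat.eq_zero_or_pos (rr e₀) with h0 | hpos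
    · have hnoadj : ∀ w', ¬ (H e₀).Adj w w' := by
        intro w' hadj
        have h1 : (1:ℕ) ≤ cdeg (H e₀) w := by
          rw [cdeg_eq_sum]
          calc (1:ℕ) = if (H e₀).Adj w w' then 1 else 0 := by rw [if_pos hadj]
          _ ≤ ∑ w'', if (H e₀).Adj w w'' then 1 else 0 :=
            Finset.single_le_sum (f := fun w'' => if (H e₀).Adj w w'' then (1:ℕ) else 0)
              (fun _ _ => by positivity) (Finset.mem_univ w')
        rw [hH, h0] at h1; omega
      rw [Finset.sum_eq_zero (fun w' _ => by rw [if_neg (hnoadj w')]; ring), h0]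
      push_cast; ring
    · have hrpos : (0:ℝ) < (rr e₀ : ℝ) := by exact_mod_cast hpos
      have hfac : ∑ w', (if (H e₀).Adj w w' then (1:ℝ) else 0) * ((Real.sqrt (rr e₀))⁻¹ * v w')
          = (Real.sqrt (rr e₀))⁻¹ * ∑ w', (if (H e₀).Adj w w' then (1:ℝ) else 0) * v w' := by
        rw [Finset.mul_sum]; exact Finset.sum_congr rfl fun w' _ => by ring
      rw [hfac] at hvrow
      have hsq : (Real.sqrt (rr e₀))⁻¹ * (Real.sqrt (rr e₀))⁻¹ = ((rr e₀ : ℝ))⁻¹ := by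
        rw [← mul_inv, Real.mul_self_sqrt hrpos.le]
      rw [← mul_assoc, hsq] at hvrow
      have := sub_eq_iff_eq_add.mp hvrow
      field_simp at this ⊢
      linarith [this]
  -- degrees of the copy vertices
  have hdeg : ∀ w : Fin (t e₀),
      cdeg (sec G t H) (Sum.inr (Sum.inr ⟨e₀, w⟩)) = rr e₀ + 1 :=
    fun w => sec_cdeg_copy e₀ w (rr e₀) (hH e₀)
  set c : ℝ := (Real.sqrt ((rr e₀ : ℝ) + 1))⁻¹ with hc
  have hcdeg : ∀ w : Fin (t e₀),
      (Real.sqrt (cdeg (sec G t H) (Sum.inr (Sum.inr ⟨e₀, w⟩))))⁻¹ = c := by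
    intro w; rw [hdeg w]; push_cast; rfl
  have hc2 : c * c = ((rr e₀ : ℝ) + 1)⁻¹ := by
    rw [hc, ← mul_inv, Real.mul_self_sqrt (by positivity)]
  -- the key sum over all vertices
  have hS : ∀ a, ∑ b, (if (sec G t H).Adj a b then (1:ℝ) else 0) *
      ((Real.sqrt (cdeg (sec G t H) b))⁻¹ * x b)
      = c * ∑ w' : Fin (t e₀),
          (if (sec G t H).Adj a (Sum.inr (Sum.inr ⟨e₀, w'⟩)) then (1:ℝ) else 0) * v w' := by
    intro a
    rw [Fintype.sum_sum_type, Fintype.sum_sum_type]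
    have h1 : ∑ u : Fin n, (if (sec G t H).Adj a (Sum.inl u) then (1:ℝ) else 0) *
        ((Real.sqrt (cdeg (sec G t H) (Sum.inl u)))⁻¹ * x (Sum.inl u)) = 0 :=
      Finset.sum_eq_zero fun u _ => by simp [hx]
    have h2 : ∑ e : G.edgeSet, (if (sec G t H).Adj a (Sum.inr (Sum.inl e)) then (1:ℝ) else 0) *
        ((Real.sqrt (cdeg (sec G t H) (Sum.inr (Sum.inl e))))⁻¹ * x (Sum.inr (Sum.inl e))) = 0 :=
      Finset.sum_eq_zero fun e _ => by simp [hx]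
    rw [h1, h2, zero_add, zero_add, ← Finset.univ_sigma_univ, Finset.sum_sigma,
      Finset.sum_eq_single e₀]
    · rw [Finset.mul_sum]
      refine Finset.sum_congr rfl fun w' _ => ?_
      rw [hxβ, hcdeg]; ring
    · intro f _ hf
      exact Finset.sum_eq_zero fun w' _ => by rw [hxne f hf]; ring
    · intro h; exact absurd (Finset.mem_univ e₀) h
  refine ⟨x, ?_, ?_⟩
  · intro hcon
    obtain ⟨w, hw⟩ := Function.ne_iff.mp hv0
    exact hw (by rw [← hxβ w, hcon]; rfl)
  · funext a
    rw [normLap_mulVec_apply, hS, Pi.smul_apply, smul_eq_mul]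
    match a with
    | Sum.inl u =>
      have : ∑ w' : Fin (t e₀),
          (if (sec G t H).Adj (Sum.inl u) (Sum.inr (Sum.inr ⟨e₀, w'⟩)) then (1:ℝ) else 0) * v w'
          = 0 := Finset.sum_eq_zero fun w' _ => by
            rw [if_neg (sec_not_adj_inl e₀ w' u)]; ring
      rw [this]; simp [hx]
    | Sum.inr (Sum.inl e) =>
      have : ∑ w' : Fin (t e₀),
          (if (sec G t H).Adj (Sum.inr (Sum.inl e)) (Sum.inr (Sum.inr ⟨e₀, w'⟩))
            then (1:ℝ) else 0) * v w'
          = ∑ w' : Fin (t e₀), (if e = e₀ then (1:ℝ) else 0) * v w' := by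
        refine Finset.sum_congr rfl fun w' _ => ?_
        rw [if_congr (sec_adj_mid e₀ w' e) rfl rfl]
      rw [this]
      by_cases he : e = e₀
      · simp only [if_pos he, one_mul]
        rw [hvS]
        simp [hx]
      · simp only [if_neg he, zero_mul, Finset.sum_const_zero]
        simp [hx]
    | Sum.inr (Sum.inr ⟨f, w⟩) =>
      by_cases hf : f = e₀
      · subst hf
        have : ∑ w' : Fin (t f),
            (if (sec G t H).Adj (Sum.inr (Sum.inr ⟨f, w⟩)) (Sum.inr (Sum.inr ⟨f, w'⟩))
              then (1:ℝ) else 0) * v w'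
            = (rr f : ℝ) * (1 - δ) * v w := by
          rw [← hsum w]
          refine Finset.sum_congr rfl fun w' _ => ?_
          rw [if_congr (sec_adj_same f w w') rfl rfl]
        rw [this, hxβ, hcdeg]
        have hpos : (0:ℝ) < (rr f : ℝ) + 1 := by positivity
        have hcc : c * (c * ((rr f : ℝ) * (1 - δ) * v w))
            = ((rr f : ℝ) + 1)⁻¹ * ((rr f : ℝ) * (1 - δ) * v w) := by
          rw [← mul_assoc, hc2]
        rw [hμ, hcc]
        field_simp
        ring
      · have : ∑ w' : Fin (t e₀),
            (if (sec G t H).Adj (Sum.inr (Sum.inr ⟨f, w⟩)) (Sum.inr (Sum.inr ⟨e₀, w'⟩))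
              then (1:ℝ) else 0) * v w'
            = 0 := Finset.sum_eq_zero fun w' _ => by
              rw [if_neg (fun h => sec_not_adj_diff e₀ f hf w' w h.symm)]; ring
        rw [this, hxne f hf]
        simp
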